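/- Suppose g : ℝ → ℝ is continuous, odd, and satisfies g(z) → 1 as z → −∞ and |g(z) − 1| ≤ C|z|^{-5/8} for z ≤ −1 and some constant C. Define u(x,t) = g(x/(−t)^{1/5}) for t < 0. Then for every l > 0, ∫_{−l}^{l} |u(x,t) − S₋(x)| dx → 0 as t → 0⁻, where S₋(x) = −sign x. -/

import Mathlib

open Filter Set intervalIntegral

lemma measurable_realSign : Measurable Real.sign := by
  unfold Real.sign
  exact Measurable.ite (measurableSet_lt measurable_id measurable_const) measurable_const
    (Measurable.ite (measurableSet_lt measurable_const measurable_id) measurable_const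
      measurable_const)

theorem shock_formation_L1loc_convergence
    (g : ℝ → ℝ) (hcont : Continuous g) (hodd : ∀ z : ℝ, g (-z) = -g z)
    (hlim : Tendsto g atBot (nhds 1))
    (C : ℝ) (hdecay : ∀ z : ℝ, z ≤ -1 → |g z - 1| ≤ C * |z| ^ (-(5:ℝ)/8)) :
    ∀ l : ℝ, 0 < l →
      Tendsto
        (fun t : ℝ => ∫ x in (-l)..l, |g (x / (-t) ^ ((1:ℝ)/5)) - (-Real.sign x)|)
        (nhdsWithin 0 (Set.Iio 0)) (nhds 0) := by
  -- C is nonnegative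
  have hC : 0 ≤ C := by
    have h := hdecay (-1) le_rfl
    have : |(-1:ℝ)| ^ (-(5:ℝ)/8) = 1 := by
      rw [abs_neg, abs_one, Real.one_rpow]
    rw [this, mul_one] at h
    exact le_trans (abs_nonneg _) h
  -- g is bounded
  obtain ⟨K, hK⟩ : ∃ K, ∀ z ∈ Icc (-1:ℝ) 1, ‖g z‖ ≤ K :=
    isCompact_Icc.exists_bound_of_continuousOn hcont.continuousOn
  set M : ℝ := max (1 + C) K with hM
  have hneg : ∀ z : ℝ, z ≤ -1 → |g z| ≤ 1 + C := by
    intro z hz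
    have h1 : (1:ℝ) ≤ |z| := by
      rw [abs_of_nonpos (by linarith)]; linarith
    have h2 : |z| ^ (-(5:ℝ)/8) ≤ 1 :=
      Real.rpow_le_one_of_one_le_of_nonpos h1 (by norm_num)
    have h3 : |g z - 1| ≤ C := le_trans (hdecay z hz) (mul_le_of_le_one_right hC h2)
    calc |g z| = |(g z - 1) + 1| := by ring_nf
      _ ≤ |g z - 1| + |(1:ℝ)| := abs_add_le _ _
      _ ≤ C + 1 := by rw [abs_one]; linarith
      _ = 1 + C := by ring
  have hbound : ∀ z : ℝ, |g z| ≤ M := by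
    intro z
    rcases le_or_gt z (-1) with hz | hz
    · exact le_trans (hneg z hz) (le_max_left _ _)
    rcases le_or_gt 1 z with hz' | hz'
    · have : |g (-z)| ≤ 1 + C := hneg (-z) (by linarith)
      rw [hodd z, abs_neg] at this
      exact le_trans this (le_max_left _ _)
    · exact le_trans (hK z ⟨hz.le, hz'.le⟩) (le_max_right _ _)
  -- limit of g at +∞
  have hgtop : Tendsto g atTop (nhds (-1)) := by
    have h1 : Tendsto (fun z : ℝ => -g (-z)) atTop (nhds (-1)) :=
      (hlim.comp tendsto_neg_atTop_atBot).neg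
    have h2 : (fun z : ℝ => -g (-z)) = g := by
      funext z; rw [hodd z, neg_neg]
    rwa [h2] at h1
  -- the scaling factor tends to 0 from the right
  have hc : Tendsto (fun t : ℝ => (-t) ^ ((1:ℝ)/5)) (nhdsWithin 0 (Iio 0))
      (nhdsWithin 0 (Ioi 0)) := by
    rw [tendsto_nhdsWithin_iff]
    constructor
    · have hct : ContinuousAt (fun x : ℝ => x ^ ((1:ℝ)/5)) 0 :=
        Real.continuousAt_rpow_const 0 ((1:ℝ)/5) (Or.inr (by norm_num))
      have hneg0 : Tendsto (fun t : ℝ => -t) (nhdsWithin 0 (Iio 0)) (nhds 0) := by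
        have h : Tendsto (fun t : ℝ => -t) (nhdsWithin (0:ℝ) (Iio 0)) (nhds (-0)) :=
          (continuous_neg.tendsto (0:ℝ)).mono_left nhdsWithin_le_nhds
        simpa using h
      have := hct.tendsto.comp hneg0
      simpa [Function.comp_def, Real.zero_rpow (by norm_num : ((1:ℝ)/5) ≠ 0)] using this
    · filter_upwards [self_mem_nhdsWithin] with t ht
      exact Real.rpow_pos_of_pos (neg_pos.mpr ht) _
  have hinv : Tendsto (fun t : ℝ => ((-t) ^ ((1:ℝ)/5))⁻¹) (nhdsWithin 0 (Iio 0)) atTop :=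
    hc.inv_tendsto_nhdsGT_zero
  intro l hl
  have hle : -l ≤ l := by linarith
  -- dominated convergence
  have key : Tendsto
      (fun t : ℝ => ∫ x in Ioc (-l) l, |g (x / (-t) ^ ((1:ℝ)/5)) - (-Real.sign x)|)
      (nhdsWithin 0 (Iio 0)) (nhds (∫ x in Ioc (-l) l, (0:ℝ))) := by
    apply MeasureTheory.tendsto_integral_filter_of_dominated_convergence
      (bound := fun _ => M + 1)
    · filter_upwards with t
      exact (((hcont.comp (continuous_id.div_const _)).measurable.sub
        measurable_realSign.neg).abs).aestronglyMeasurable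
    · filter_upwards with t
      filter_upwards with x
      have h1 : |g (x / (-t) ^ ((1:ℝ)/5))| ≤ M := hbound _
      have h2 : |Real.sign x| ≤ 1 := by
        rcases Real.sign_apply_eq x with h | h | h <;> rw [h] <;> norm_num
      rw [Real.norm_eq_abs, abs_abs]
      calc |g (x / (-t) ^ ((1:ℝ)/5)) - (-Real.sign x)|
          ≤ |g (x / (-t) ^ ((1:ℝ)/5))| + |(-Real.sign x)| := abs_sub _ _
        _ ≤ M + 1 := by rw [abs_neg]; linarith
    · exact MeasureTheory.integrableOn_const measure_Ioc_lt_top.ne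
    · have hx0 : ∀ᵐ x : ℝ ∂(MeasureTheory.volume.restrict (Ioc (-l) l)), x ≠ 0 := by
        refine MeasureTheory.ae_restrict_of_ae ?_
        refine MeasureTheory.ae_iff.mpr ?_
        have : {x : ℝ | ¬ x ≠ 0} = {0} := by ext x; simp
        rw [this]; simp
      filter_upwards [hx0] with x hx
      have hconv : Tendsto (fun t : ℝ => g (x / (-t) ^ ((1:ℝ)/5)))
          (nhdsWithin 0 (Iio 0)) (nhds (-Real.sign x)) := by
        rcases hx.lt_or_gt with hxneg | hxpos
        · have harg : Tendsto (fun t : ℝ => x / (-t) ^ ((1:ℝ)/5))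
              (nhdsWithin 0 (Iio 0)) atBot := by
            simp_rw [div_eq_mul_inv]
            exact (Filter.tendsto_const_mul_atBot_of_neg hxneg).mpr hinv
          have := hlim.comp harg
          rw [Real.sign_of_neg hxneg]
          simpa [Function.comp_def] using this
        · have harg : Tendsto (fun t : ℝ => x / (-t) ^ ((1:ℝ)/5))
              (nhdsWithin 0 (Iio 0)) atTop := by
            simp_rw [div_eq_mul_inv]
            exact (Filter.tendsto_const_mul_atTop_iff_pos hinv).mpr hxpos
          have := hgtop.comp harg
          rw [Real.sign_of_pos hxpos]
          exact this
      have := (hconv.sub_const (-Real.sign x)).abs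
      simpa using this
  simp_rw [intervalIntegral.integral_of_le hle]
  simpa using key
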